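/- Let C be a triangulated category with a semi-orthogonal decomposition (C(0), C(-1)), i.e. C(0) and C(-1) are full triangulated subcategories with Hom(x, y) = 0 for all x ∈ C(0), y ∈ C(-1), and C is generated by C(0) and C(-1) under cones and shifts. Then for every object x of C there exists a distinguished triangle x₀ → x → x₁ → x₀[1] with x₀ ∈ C(0) and x₁ ∈ C(-1). -/

import Mathlib

open CategoryTheory CategoryTheory.Limits CategoryTheory.Pretriangulated

namespace CategoryTheory

/-- Ported from the older Mathlib: a predicate closed under isomorphisms. -/
class ClosedUnderIsomorphisms {C : Type*} [Category C] (P : C → Prop) : Prop where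
  of_iso {X Y : C} (_ : X ≅ Y) (_ : P X) : P Y

namespace Triangulated

/-- Ported from the older Mathlib: a triangulated subcategory. -/
structure Subcategory (C : Type*) [Category C] [HasZeroObject C] [HasShift C ℤ]
    [Preadditive C] [∀ n : ℤ, (shiftFunctor C n).Additive] [Pretriangulated C] where
  P : C → Prop
  zero' : ∃ (Z : C) (_ : IsZero Z), P Z
  shift (X : C) (n : ℤ) : P X → P (X⟦n⟧)
  ext₂' (T : Triangle C) (_ : T ∈ distTriang C) : P T.obj₁ → P T.obj₃ →
    ∃ (Y : C) (_ : P Y), Nonempty (T.obj₂ ≅ Y)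

end Triangulated

end CategoryTheory

namespace CategoryTheory

def isoClosure {C : Type*} [Category C] (P : C → Prop) : C → Prop :=
  fun X => ∃ (Y : C) (_ : P Y), Nonempty (X ≅ Y)

lemma le_isoClosure {C : Type*} [Category C] (P : C → Prop) (X : C) (h : P X) :
    isoClosure P X :=
  ⟨X, h, ⟨Iso.refl X⟩⟩

lemma mem_of_iso {C : Type*} [Category C] (P : C → Prop) [ClosedUnderIsomorphisms P]
    {X Y : C} (e : X ≅ Y) (h : P X) : P Y :=
  ClosedUnderIsomorphisms.of_iso e h

instance isoClosure_closed {C : Type*} [Category C] (P : C → Prop) :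
    ClosedUnderIsomorphisms (isoClosure P) where
  of_iso e := by
    rintro ⟨Z, hZ, ⟨f⟩⟩
    exact ⟨Z, hZ, ⟨e.symm ≪≫ f⟩⟩

namespace Triangulated.Subcategory

variable {C : Type*} [Category C] [HasZeroObject C] [HasShift C ℤ] [Preadditive C]
  [∀ n : ℤ, (shiftFunctor C n).Additive] [Pretriangulated C]

def isoClosure (S : Subcategory C) : Subcategory C where
  P := CategoryTheory.isoClosure S.P
  zero' := by
    obtain ⟨Z, hZ, h⟩ := S.zero'
    exact ⟨Z, hZ, Z, h, ⟨Iso.refl Z⟩⟩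
  shift X n := by
    rintro ⟨Y, hY, ⟨e⟩⟩
    exact ⟨Y⟦n⟧, S.shift Y n hY, ⟨(shiftFunctor C n).mapIso e⟩⟩
  ext₂' T hT := by
    rintro ⟨Y₁, h₁, ⟨e₁⟩⟩ ⟨Y₃, h₃, ⟨e₃⟩⟩
    let T' : Triangle C := Triangle.mk (e₁.inv ≫ T.mor₁) (T.mor₂ ≫ e₃.hom)
      (e₃.inv ≫ T.mor₃ ≫ (shiftFunctor C (1 : ℤ)).map e₁.hom)
    have hT' : T' ∈ distTriang C := by
      refine isomorphic_distinguished T hT T' ?_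
      refine Triangle.isoMk T' T e₁.symm (Iso.refl _) e₃.symm ?_ ?_ ?_
      · simp [T', Triangle.mk]
      · simp [T', Triangle.mk]
      · simp [T', Triangle.mk, ← Functor.map_comp]
    obtain ⟨Y, hY, ⟨e⟩⟩ := S.ext₂' T' hT' h₁ h₃
    exact ⟨Y, ⟨Y, hY, ⟨Iso.refl Y⟩⟩, ⟨e⟩⟩

instance isoClosure_closed' (S : Subcategory C) : ClosedUnderIsomorphisms S.isoClosure.P :=
  CategoryTheory.isoClosure_closed S.P

lemma ext₂ (S : Subcategory C) [ClosedUnderIsomorphisms S.P] (T : Triangle C)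
    (hT : T ∈ distTriang C) (h₁ : S.P T.obj₁) (h₃ : S.P T.obj₃) : S.P T.obj₂ := by
  obtain ⟨Y, hY, ⟨e⟩⟩ := S.ext₂' T hT h₁ h₃
  exact mem_of_iso S.P e.symm hY

open ZeroObject in
lemma zero (S : Subcategory C) [ClosedUnderIsomorphisms S.P] : S.P 0 := by
  obtain ⟨Z, hZ, h⟩ := S.zero'
  exact mem_of_iso S.P hZ.isoZero h

end Triangulated.Subcategory

end CategoryTheory

open CategoryTheory CategoryTheory.Limits CategoryTheory.Pretriangulated

set_option linter.unusedSectionVars false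

namespace SODAux

open CategoryTheory.Category CategoryTheory.Preadditive ZeroObject

variable {C : Type*} [Category C] [Preadditive C] [HasZeroObject C]
    [HasShift C ℤ] [∀ n : ℤ, (shiftFunctor C n).Additive] [Pretriangulated C]

@[simps]
abbrev Triangle.mk {X Y Z : C} (f : X ⟶ Y) (g : Y ⟶ Z) (h : Z ⟶ X⟦(1 : ℤ)⟧) : Triangle C :=
  { obj₁ := X, obj₂ := Y, obj₃ := Z, mor₁ := f, mor₂ := g, mor₃ := h }

@[simps]
abbrev Triangle.rot (T : Triangle C) : Triangle C :=
  { obj₁ := T.obj₂, obj₂ := T.obj₃, obj₃ := T.obj₁⟦(1 : ℤ)⟧, mor₁ := T.mor₂, mor₂ := T.mor₃,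
    mor₃ := -(shiftFunctor C (1 : ℤ)).map T.mor₁ }

lemma distinguished_cocone_triangle {X Y : C} (f : X ⟶ Y) :
    ∃ (Z : C) (g : Y ⟶ Z) (h : Z ⟶ X⟦(1 : ℤ)⟧), Triangle.mk f g h ∈ distTriang C :=
  Pretriangulated.distinguished_cocone_triangle f

lemma rot_of_distTriang (T : Triangle C) (hT : T ∈ distTriang C) :
    Triangle.rot T ∈ distTriang C :=
  Pretriangulated.rot_of_distTriang T hT

def rOrth (C₀ : Triangulated.Subcategory C) (z : C) : Prop :=
  ∀ (t : C) (k : ℤ), C₀.P t → ∀ f : t ⟶ z⟦k⟧, f = 0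

variable {C₀ C₁ : Triangulated.Subcategory C}

lemma rOrth_iso {z z' : C} (e : z ≅ z') (h : rOrth C₀ z) : rOrth C₀ z' := by
  intro t k ht f
  have h0 : f ≫ (shiftFunctor C k).map e.inv = 0 := h t k ht _
  have : f ≫ (shiftFunctor C k).map e.inv ≫ (shiftFunctor C k).map e.hom = 0 := by
    rw [← assoc, h0, zero_comp]
  simpa [← Functor.map_comp] using this

lemma from_homzero {z : C}
    (h0 : ∀ (t : C), C₀.isoClosure.P t → ∀ f : t ⟶ z, f = 0) : rOrth C₀ z := by
  intro t k ht f
  set E := shiftFunctorCompIsoId C k (-k) (by omega) with hE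
  have h1 : (shiftFunctor C (-k)).map f ≫ E.hom.app z = 0 :=
    h0 _ (le_isoClosure _ _ (C₀.shift t (-k) ht)) _
  have h2 : (shiftFunctor C (-k)).map f = 0 := by
    rw [← cancel_mono (E.hom.app z), h1, zero_comp]
  apply (shiftFunctor C (-k)).map_injective
  rw [h2, Functor.map_zero]

lemma horthS {t z : C} (ht : C₀.isoClosure.P t) (hz : rOrth C₀ z) {k : ℤ}
    (f : t ⟶ z⟦k⟧) : f = 0 := by
  obtain ⟨t', ht', ⟨e⟩⟩ := ht
  have h0 : e.inv ≫ f = 0 := hz t' k ht' _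
  rw [← cancel_epi e.inv, h0, comp_zero]

lemma horth0 {t z : C} (ht : C₀.isoClosure.P t) (hz : rOrth C₀ z)
    (f : t ⟶ z) : f = 0 := by
  have h0 : f ≫ (shiftFunctorZero C ℤ).inv.app z = 0 := horthS ht hz _
  rw [← cancel_mono ((shiftFunctorZero C ℤ).inv.app z), h0, zero_comp]

lemma rOrth_of_C₁ (hbr : ∀ z : C, C₁.P z → rOrth C₀ z) {z : C}
    (hz : C₁.isoClosure.P z) : rOrth C₀ z := by
  obtain ⟨z', hz', ⟨e⟩⟩ := hz
  exact rOrth_iso e.symm (hbr z' hz')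

lemma shift_cancel_one {P Q t : C} (f : P ⟶ Q) (g : t ⟶ P⟦(1:ℤ)⟧)
    (h : g ≫ (shiftFunctor C (1:ℤ)).map f = 0)
    (hinj : ∀ (g' : (shiftFunctor C (-1:ℤ)).obj t ⟶ P), g' ≫ f = 0 → g' = 0) : g = 0 := by
  set E := shiftFunctorCompIsoId C (1:ℤ) (-1:ℤ) (by omega) with hE
  have h1 : ((shiftFunctor C (-1:ℤ)).map g ≫ E.hom.app P) ≫ f = 0 := by
    have hnat := E.hom.naturality f
    dsimp at hnat
    rw [assoc, ← hnat, ← assoc, ← Functor.map_comp, h, Functor.map_zero, zero_comp]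
  have h2 := hinj _ h1
  have h3 : (shiftFunctor C (-1:ℤ)).map g = 0 := by
    rw [← cancel_mono (E.hom.app P), h2, zero_comp]
  apply (shiftFunctor C (-1:ℤ)).map_injective
  rw [h3, Functor.map_zero]

lemma qext (hbr : ∀ z : C, C₁.P z → rOrth C₀ z)
    {X Y Z : C} (u : X ⟶ Y) (v : Y ⟶ Z) (w : Z ⟶ X⟦(1:ℤ)⟧)
    (hT : Triangle.mk u v w ∈ distTriang C)
    {A B : C} (a : A ⟶ X) (b : X ⟶ B) (e : B ⟶ A⟦(1:ℤ)⟧)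
    (hTX : Triangle.mk a b e ∈ distTriang C)
    {A' B' : C} (a' : A' ⟶ Z) (b' : Z ⟶ B') (e' : B' ⟶ A'⟦(1:ℤ)⟧)
    (hTZ : Triangle.mk a' b' e' ∈ distTriang C)
    (hA : C₀.isoClosure.P A) (hA' : C₀.isoClosure.P A')
    (hB₁ : C₁.isoClosure.P B) (hB'₁ : C₁.isoClosure.P B') :
    ∃ (M N : C) (m : M ⟶ Y⟦(1:ℤ)⟧) (n : Y⟦(1:ℤ)⟧ ⟶ N) (o : N ⟶ M⟦(1:ℤ)⟧),
      C₀.isoClosure.P M ∧ C₁.isoClosure.P N ∧ Triangle.mk m n o ∈ distTriang C := by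
  have hB : rOrth C₀ B := rOrth_of_C₁ hbr hB₁
  have hB' : rOrth C₀ B' := rOrth_of_C₁ hbr hB'₁
  -- step 1 : ψ₁ : A' ⟶ A⟦1⟧ with ψ₁ ≫ a⟦1⟧' = a' ≫ w
  have hwb : a' ≫ w ≫ (shiftFunctor C (1:ℤ)).map b = 0 := horthS hA' hB _
  obtain ⟨ψ₁', hψ'⟩ := Triangle.coyoneda_exact₃ _
    (rot_of_distTriang _ (rot_of_distTriang _ hTX)) (a' ≫ w)
    (by dsimp; rw [comp_neg, assoc, hwb, neg_zero])
  dsimp at hψ'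
  set ψ₁ : A' ⟶ A⟦(1:ℤ)⟧ := -ψ₁' with hψ₁def
  have hψ : ψ₁ ≫ (shiftFunctor C (1:ℤ)).map a = a' ≫ w := by
    rw [hψ₁def, neg_comp, ← comp_neg, ← hψ']
  clear hψ' hψ₁def
  clear_value ψ₁
  -- step 2 : the cone M of ψ₁
  obtain ⟨M, i, p, hTM⟩ := distinguished_cocone_triangle ψ₁
  have hM : C₀.isoClosure.P M := by
    refine C₀.isoClosure.ext₂ (Triangle.rot (Triangle.mk ψ₁ i p))
      (rot_of_distTriang _ hTM) ?_ ?_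
    · exact C₀.isoClosure.shift A 1 hA
    · exact C₀.isoClosure.shift A' 1 hA'
  -- step 3 : TR3 gives m : M ⟶ Y⟦1⟧
  obtain ⟨m, hm₁, hm₂⟩ := complete_distinguished_triangle_morphism
    (Triangle.mk ψ₁ i p) (Triangle.rot (Triangle.rot (Triangle.mk u v w)))
    hTM (rot_of_distTriang _ (rot_of_distTriang _ hT))
    a' ((shiftFunctor C (1:ℤ)).map a) (by dsimp; exact hψ)
  dsimp at hm₁ hm₂
  change M ⟶ (shiftFunctor C (1:ℤ)).obj Y at m
  -- hm₁ : i ≫ m = a⟦1⟧ ≫ (-(u⟦1⟧))  ;  hm₂ : p ≫ a'⟦1⟧ = m ≫ (-(v⟦1⟧))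
  obtain ⟨N, n, o, hTN⟩ := distinguished_cocone_triangle m
  have hψi : ψ₁ ≫ i = 0 := by
    have h0 := comp_distTriang_mor_zero₁₂ _ hTM
    dsimp at h0
    exact h0
  -- (I) : maps from S₀-objects to M inject into Y⟦1⟧
  have hI : ∀ (t : C), C₀.isoClosure.P t → ∀ g₁ : t ⟶ M, g₁ ≫ m = 0 → g₁ = 0 := by
    intro t ht g₁ hg
    have h1 : (g₁ ≫ p) ≫ (shiftFunctor C (1:ℤ)).map a' = 0 := by
      rw [assoc, hm₂, ← assoc, hg, zero_comp]
    obtain ⟨σ, hσ⟩ := Triangle.coyoneda_exact₂ _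
      (rot_of_distTriang _ (rot_of_distTriang _ hTZ)) (g₁ ≫ p)
      (by dsimp; rw [comp_neg, h1, neg_zero])
    dsimp at hσ
    have hσ0 : σ = 0 := horth0 ht hB' σ
    have h2 : g₁ ≫ p = 0 := by rw [hσ, hσ0, zero_comp]
    obtain ⟨g₂, hg₂⟩ := Triangle.coyoneda_exact₃ _ hTM g₁ h2
    dsimp at hg₂
    change t ⟶ (shiftFunctor C (1:ℤ)).obj A at g₂
    have h3 : (g₂ ≫ (shiftFunctor C (1:ℤ)).map a) ≫ (-(shiftFunctor C (1:ℤ)).map u) = 0 := by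
      rw [assoc, ← hm₁, ← assoc, ← hg₂, hg]
    obtain ⟨τ, hτ⟩ := Triangle.coyoneda_exact₂ _
      (rot_of_distTriang _ (rot_of_distTriang _ hT)) (g₂ ≫ (shiftFunctor C (1:ℤ)).map a)
      (by dsimp; exact h3)
    dsimp at hτ
    have hτb : τ ≫ b' = 0 := horth0 ht hB' _
    obtain ⟨τ₁, hτ₁⟩ := Triangle.coyoneda_exact₂ _ hTZ τ hτb
    dsimp at hτ₁
    have h4 : (g₂ - τ₁ ≫ ψ₁) ≫ (shiftFunctor C (1:ℤ)).map a = 0 := by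
      rw [sub_comp, assoc, hψ, ← assoc, ← hτ₁, ← hτ, sub_self]
    obtain ⟨σ₂, hσ₂⟩ := Triangle.coyoneda_exact₂ _
      (rot_of_distTriang _ (rot_of_distTriang _ hTX)) (g₂ - τ₁ ≫ ψ₁)
      (by dsimp; rw [comp_neg, h4, neg_zero])
    dsimp at hσ₂
    have hσ₂0 : σ₂ = 0 := horth0 ht hB σ₂
    rw [hσ₂0, zero_comp] at hσ₂
    have h5 : g₂ = τ₁ ≫ ψ₁ := sub_eq_zero.mp hσ₂
    rw [hg₂, h5, assoc]
    dsimp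
    rw [hψi, comp_zero]
  have hvw : v ≫ w = 0 := by
    have h' := comp_distTriang_mor_zero₂₃ _ hT
    dsimp at h'
    exact h'
  -- (F) : every map from an S₀-object to Y⟦1⟧ factors through m
  have hF : ∀ (t : C), C₀.isoClosure.P t → ∀ f₂ : t ⟶ (shiftFunctor C (1:ℤ)).obj Y,
      ∃ g, f₂ = g ≫ m := by
    intro t ht f₂
    have hb'0 : f₂ ≫ (shiftFunctor C (1:ℤ)).map v ≫ (shiftFunctor C (1:ℤ)).map b' = 0 :=
      horthS ht hB' _
    obtain ⟨g, hgdef⟩ := Triangle.coyoneda_exact₃ _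
      (rot_of_distTriang _ (rot_of_distTriang _ hTZ))
      (f₂ ≫ (-(shiftFunctor C (1:ℤ)).map v))
      (by dsimp; simp only [comp_neg, neg_comp, neg_neg, assoc]; exact hb'0)
    dsimp at hgdef
    change t ⟶ (shiftFunctor C (1:ℤ)).obj A' at g
    have hgv : f₂ ≫ (shiftFunctor C (1:ℤ)).map v = g ≫ (shiftFunctor C (1:ℤ)).map a' := by
      simp only [comp_neg, neg_inj] at hgdef
      exact hgdef
    have hx0 : (g ≫ (shiftFunctor C (1:ℤ)).map ψ₁) ≫
        (shiftFunctor C (1:ℤ)).map ((shiftFunctor C (1:ℤ)).map a) = 0 := by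
      rw [assoc, ← Functor.map_comp, hψ, Functor.map_comp, ← assoc, ← hgv, assoc,
        ← Functor.map_comp, hvw, Functor.map_zero, comp_zero]
    obtain ⟨σ₃, hσ₃⟩ := Triangle.coyoneda_exact₂ _
      (rot_of_distTriang _ (rot_of_distTriang _ (rot_of_distTriang _
        (rot_of_distTriang _ (rot_of_distTriang _ hTX)))))
      (g ≫ (shiftFunctor C (1:ℤ)).map ψ₁)
      (by dsimp; simp only [Functor.map_neg, comp_neg, neg_neg]; exact hx0)
    dsimp at hσ₃
    change t ⟶ (shiftFunctor C (1:ℤ)).obj B at σ₃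
    have hσ₃0 : σ₃ = 0 := horthS ht hB σ₃
    have hx : g ≫ (shiftFunctor C (1:ℤ)).map ψ₁ = 0 := by rw [hσ₃, hσ₃0, zero_comp]
    obtain ⟨g₁, hg₁⟩ := Triangle.coyoneda_exact₃ _ (rot_of_distTriang _ hTM) g
      (by dsimp; rw [comp_neg, hx, neg_zero])
    dsimp at hg₁
    change t ⟶ M at g₁
    have hd : (f₂ + g₁ ≫ m) ≫ (-(shiftFunctor C (1:ℤ)).map v) = 0 := by
      calc (f₂ + g₁ ≫ m) ≫ (-(shiftFunctor C (1:ℤ)).map v)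
          = f₂ ≫ (-(shiftFunctor C (1:ℤ)).map v) +
            g₁ ≫ (m ≫ (-(shiftFunctor C (1:ℤ)).map v)) := by rw [add_comp, assoc]
        _ = -(g ≫ (shiftFunctor C (1:ℤ)).map a') +
            g₁ ≫ (p ≫ (shiftFunctor C (1:ℤ)).map a') := by rw [comp_neg, hgv, ← hm₂]
        _ = -(g ≫ (shiftFunctor C (1:ℤ)).map a') +
            (g₁ ≫ p) ≫ (shiftFunctor C (1:ℤ)).map a' := by rw [assoc]
        _ = 0 := by rw [← hg₁, neg_add_cancel]
    obtain ⟨d₁, hd₁⟩ := Triangle.coyoneda_exact₃ _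
      (rot_of_distTriang _ (rot_of_distTriang _ hT)) (f₂ + g₁ ≫ m) (by dsimp; exact hd)
    dsimp at hd₁
    change t ⟶ (shiftFunctor C (1:ℤ)).obj X at d₁
    have hdb : d₁ ≫ (shiftFunctor C (1:ℤ)).map b = 0 := horthS ht hB _
    obtain ⟨d₂, hd₂⟩ := Triangle.coyoneda_exact₂ _
      (rot_of_distTriang _ (rot_of_distTriang _ (rot_of_distTriang _ hTX))) d₁
      (by dsimp; rw [comp_neg, hdb, neg_zero])
    dsimp at hd₂
    change t ⟶ (shiftFunctor C (1:ℤ)).obj A at d₂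
    refine ⟨-(d₂ ≫ i) - g₁, ?_⟩
    have hmam : (shiftFunctor C (1:ℤ)).map a ≫ (shiftFunctor C (1:ℤ)).map u = -(i ≫ m) := by
      rw [hm₁, comp_neg, neg_neg]
    calc f₂ = d₁ ≫ (-(shiftFunctor C (1:ℤ)).map u) - g₁ ≫ m := eq_sub_of_add_eq hd₁
      _ = d₂ ≫ ((shiftFunctor C (1:ℤ)).map a ≫ (shiftFunctor C (1:ℤ)).map u) - g₁ ≫ m := by
          rw [hd₂]; simp only [comp_neg, neg_comp, neg_neg, assoc]
      _ = d₂ ≫ (-(i ≫ m)) - g₁ ≫ m := by rw [hmam]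
      _ = (-(d₂ ≫ i) - g₁) ≫ m := by simp only [comp_neg, sub_comp, neg_comp, assoc]
  have hmn : m ≫ n = 0 := by
    have h' := comp_distTriang_mor_zero₁₂ _ hTN
    dsimp at h'
    exact h'
  -- N is right-orthogonal to C₀
  have hN0 : ∀ (t : C), C₀.isoClosure.P t → ∀ f : t ⟶ N, f = 0 := by
    intro t ht f
    have hfo : f ≫ o = 0 := by
      refine shift_cancel_one m (f ≫ o) ?_ (fun g' hg' => hI _ ?_ g' hg')
      · have h' := comp_distTriang_mor_zero₃₁ _ hTN
        dsimp at h'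
        rw [assoc, h', comp_zero]
      · exact C₀.isoClosure.shift t (-1) ht
    obtain ⟨f₂, hf₂⟩ := Triangle.coyoneda_exact₃ _ hTN f hfo
    dsimp at hf₂
    change t ⟶ (shiftFunctor C (1:ℤ)).obj Y at f₂
    obtain ⟨g', hg'⟩ := hF t ht f₂
    rw [hf₂, hg', assoc, hmn, comp_zero]
  have hN : rOrth C₀ N := from_homzero hN0
  -- the extension K of B'⟦0⟧-part by B
  have hab : a ≫ b = 0 := by
    have h' := comp_distTriang_mor_zero₁₂ _ hTX
    dsimp at h'
    exact h'
  obtain ⟨ε, hε⟩ := Triangle.yoneda_exact₂ _ hTZ (w ≫ (shiftFunctor C (1:ℤ)).map b)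
    (by dsimp; rw [← assoc, ← hψ, assoc, ← Functor.map_comp, hab, Functor.map_zero, comp_zero])
  dsimp at hε
  change B' ⟶ (shiftFunctor C (1:ℤ)).obj B at ε
  obtain ⟨K, k, l, hTK⟩ := distinguished_cocone_triangle ε
  have hK : C₁.isoClosure.P K := by
    refine C₁.isoClosure.ext₂ (Triangle.rot (Triangle.mk ε k l)) (rot_of_distTriang _ hTK) ?_ ?_
    · exact C₁.isoClosure.shift B 1 hB₁
    · exact C₁.isoClosure.shift B' 1 hB'₁
  have hOK : rOrth C₀ K := rOrth_of_C₁ hbr hK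
  -- TR3 gives tY : Y⟦1⟧ ⟶ K
  obtain ⟨tY, ht₁, ht₂⟩ := complete_distinguished_triangle_morphism
    (Triangle.rot (Triangle.rot (Triangle.mk u v w))) (Triangle.mk ε k l)
    (rot_of_distTriang _ (rot_of_distTriang _ hT)) hTK
    b' ((shiftFunctor C (1:ℤ)).map b) (by dsimp; exact hε)
  dsimp at ht₁ ht₂
  change (shiftFunctor C (1:ℤ)).obj Y ⟶ K at tY
  have hu_t : (shiftFunctor C (1:ℤ)).map u ≫ tY =
      -((shiftFunctor C (1:ℤ)).map b ≫ k) := by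
    rw [neg_comp] at ht₁
    exact neg_eq_iff_eq_neg.mp ht₁
  have htl : tY ≫ l = (-(shiftFunctor C (1:ℤ)).map v) ≫ (shiftFunctor C (1:ℤ)).map b' :=
    ht₂.symm
  -- β : B⟦1⟧ ⟶ N
  have hmam : (shiftFunctor C (1:ℤ)).map a ≫ (shiftFunctor C (1:ℤ)).map u = -(i ≫ m) := by
    rw [hm₁, comp_neg, neg_neg]
  obtain ⟨β', hβ'⟩ := Triangle.yoneda_exact₂ _
    (rot_of_distTriang _ (rot_of_distTriang _ (rot_of_distTriang _ hTX)))
    ((shiftFunctor C (1:ℤ)).map u ≫ n)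
    (by dsimp
        rw [neg_comp, ← assoc, hmam, neg_comp, neg_neg, assoc, hmn, comp_zero])
  dsimp at hβ'
  change (shiftFunctor C (1:ℤ)).obj B ⟶ N at β'
  set β : (shiftFunctor C (1:ℤ)).obj B ⟶ N := -β' with hβdef
  have hβ : (shiftFunctor C (1:ℤ)).map b ≫ β = (shiftFunctor C (1:ℤ)).map u ≫ n := by
    rw [hβdef, comp_neg, ← neg_comp, ← hβ']
  -- r : N ⟶ K
  have hmt : m ≫ tY = 0 := horth0 hM hOK _
  obtain ⟨r, hr⟩ := Triangle.yoneda_exact₂ _ hTN tY (by dsimp; exact hmt)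
  dsimp at hr
  change N ⟶ K at r
  -- s : K ⟶ N
  have hwu : w ≫ (shiftFunctor C (1:ℤ)).map u = 0 := by
    have h' := comp_distTriang_mor_zero₃₁ _ hT
    dsimp at h'
    exact h'
  have hεβ : ε ≫ β = 0 := by
    have h1 : b' ≫ (ε ≫ β) = 0 := by
      rw [← assoc, ← hε, assoc, hβ, ← assoc, hwu, zero_comp]
    obtain ⟨ρ, hρ⟩ := Triangle.yoneda_exact₃ _ hTZ (ε ≫ β) (by dsimp; exact h1)
    dsimp at hρ
    change (shiftFunctor C (1:ℤ)).obj A' ⟶ N at ρ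
    have hρ0 : ρ = 0 := horth0 (C₀.isoClosure.shift A' 1 hA') hN ρ
    rw [hρ, hρ0, comp_zero]
  obtain ⟨s₀, hs₀⟩ := Triangle.yoneda_exact₂ _ hTK β (by dsimp; exact hεβ)
  dsimp at hs₀
  change K ⟶ N at s₀
  -- correct s₀ so that tY ≫ s = n
  have hD : (shiftFunctor C (1:ℤ)).map u ≫ (tY ≫ s₀ + n) = 0 := by
    calc (shiftFunctor C (1:ℤ)).map u ≫ (tY ≫ s₀ + n)
        = ((shiftFunctor C (1:ℤ)).map u ≫ tY) ≫ s₀ +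
          (shiftFunctor C (1:ℤ)).map u ≫ n := by rw [comp_add, assoc]
      _ = 0 := by rw [hu_t, neg_comp, assoc, ← hs₀, hβ, neg_add_cancel]
  obtain ⟨ρ₂, hρ₂⟩ := Triangle.yoneda_exact₂ _
    (rot_of_distTriang _ (rot_of_distTriang _ (rot_of_distTriang _ hT)))
    (tY ≫ s₀ + n) (by dsimp; rw [neg_comp, hD, neg_zero])
  dsimp at hρ₂
  change (shiftFunctor C (1:ℤ)).obj Z ⟶ N at ρ₂
  have hρ₂a : (shiftFunctor C (1:ℤ)).map a' ≫ ρ₂ = 0 :=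
    horth0 (C₀.isoClosure.shift A' 1 hA') hN _
  obtain ⟨ρ₃, hρ₃⟩ := Triangle.yoneda_exact₂ _
    (rot_of_distTriang _ (rot_of_distTriang _ (rot_of_distTriang _ hTZ)))
    ρ₂ (by dsimp; rw [neg_comp, hρ₂a, neg_zero])
  dsimp at hρ₃
  change (shiftFunctor C (1:ℤ)).obj B' ⟶ N at ρ₃
  set s : K ⟶ N := -s₀ - l ≫ ρ₃ with hsdef
  have hkl : k ≫ l = 0 := by
    have h' := comp_distTriang_mor_zero₂₃ _ hTK
    dsimp at h'
    exact h'
  have hks : k ≫ s = -β := by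
    rw [hsdef, comp_sub, comp_neg, ← hs₀, ← assoc, hkl, zero_comp, sub_zero]
  have hts : tY ≫ s = n := by
    have h1 : tY ≫ s₀ = (-(shiftFunctor C (1:ℤ)).map v) ≫ ρ₂ - n := eq_sub_of_add_eq hρ₂
    calc tY ≫ s = -(tY ≫ s₀) - (tY ≫ l) ≫ ρ₃ := by
          rw [hsdef, comp_sub, comp_neg, assoc]
      _ = -((-(shiftFunctor C (1:ℤ)).map v) ≫ ρ₂ - n) -
          ((-(shiftFunctor C (1:ℤ)).map v) ≫ (shiftFunctor C (1:ℤ)).map b') ≫ ρ₃ := by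
          rw [h1, htl]
      _ = n := by
          rw [hρ₃]
          simp only [comp_neg, neg_comp, neg_neg, neg_sub, assoc]
          abel
  -- r ≫ s = 𝟙 N
  have hrs : r ≫ s = 𝟙 N := by
    have h1 : n ≫ (r ≫ s - 𝟙 N) = 0 := by
      rw [comp_sub, comp_id, ← assoc, ← hr, hts, sub_self]
    obtain ⟨ζ, hζ⟩ := Triangle.yoneda_exact₃ _ hTN (r ≫ s - 𝟙 N) (by dsimp; exact h1)
    dsimp at hζ
    change (shiftFunctor C (1:ℤ)).obj M ⟶ N at ζ
    have hζ0 : ζ = 0 := horth0 (C₀.isoClosure.shift M 1 hM) hN ζ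
    rw [hζ0, comp_zero] at hζ
    exact sub_eq_zero.mp hζ
  -- β ≫ r = -k
  have hβr : β ≫ r = -k := by
    have h1 : (shiftFunctor C (1:ℤ)).map b ≫ (β ≫ r + k) = 0 := by
      rw [comp_add, ← assoc, hβ, assoc, ← hr, hu_t, neg_add_cancel]
    obtain ⟨ρ₄, hρ₄⟩ := Triangle.yoneda_exact₂ _
      (rot_of_distTriang _ (rot_of_distTriang _ (rot_of_distTriang _
        (rot_of_distTriang _ hTX))))
      (β ≫ r + k) (by dsimp; rw [neg_comp, h1, neg_zero])
    dsimp at hρ₄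
    change (shiftFunctor C (1:ℤ)).obj ((shiftFunctor C (1:ℤ)).obj A) ⟶ K at ρ₄
    have hρ₄0 : ρ₄ = 0 :=
      horth0 (C₀.isoClosure.shift _ 1 (C₀.isoClosure.shift A 1 hA)) hOK ρ₄
    rw [hρ₄0, comp_zero] at hρ₄
    exact eq_neg_of_add_eq_zero_left hρ₄
  -- s ≫ r = 𝟙 K
  have hsr : s ≫ r = 𝟙 K := by
    have h1 : k ≫ (s ≫ r - 𝟙 K) = 0 := by
      rw [comp_sub, comp_id, ← assoc, hks, neg_comp, hβr, neg_neg, sub_self]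
    obtain ⟨ρ₅, hρ₅⟩ := Triangle.yoneda_exact₃ _ hTK (s ≫ r - 𝟙 K) (by dsimp; exact h1)
    dsimp at hρ₅
    change (shiftFunctor C (1:ℤ)).obj B' ⟶ K at ρ₅
    have h2 : tY ≫ (s ≫ r - 𝟙 K) = 0 := by
      rw [comp_sub, comp_id, ← assoc, hts, ← hr, sub_self]
    have h2' : ((-(shiftFunctor C (1:ℤ)).map v) ≫ (shiftFunctor C (1:ℤ)).map b') ≫ ρ₅ = 0 := by
      rw [← htl, assoc, ← hρ₅]
      exact h2
    have h3 : (shiftFunctor C (1:ℤ)).map v ≫ ((shiftFunctor C (1:ℤ)).map b' ≫ ρ₅) = 0 := by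
      simp only [neg_comp, assoc, neg_eq_zero] at h2'
      exact h2'
    obtain ⟨ρ₇, hρ₇⟩ := Triangle.yoneda_exact₂ _
      (rot_of_distTriang _ (rot_of_distTriang _ (rot_of_distTriang _
        (rot_of_distTriang _ hT))))
      ((shiftFunctor C (1:ℤ)).map b' ≫ ρ₅) (by dsimp; rw [neg_comp, h3, neg_zero])
    dsimp at hρ₇
    change (shiftFunctor C (1:ℤ)).obj ((shiftFunctor C (1:ℤ)).obj X) ⟶ K at ρ₇
    have hρ₇a : (shiftFunctor C (1:ℤ)).map ((shiftFunctor C (1:ℤ)).map a) ≫ ρ₇ = 0 :=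
      horth0 (C₀.isoClosure.shift _ 1 (C₀.isoClosure.shift A 1 hA)) hOK _
    obtain ⟨ρ₈, hρ₈⟩ := Triangle.yoneda_exact₂ _
      (rot_of_distTriang _ (rot_of_distTriang _ (rot_of_distTriang _
        (rot_of_distTriang _ (rot_of_distTriang _ (rot_of_distTriang _ hTX))))))
      ρ₇ (by dsimp; simp only [Functor.map_neg, neg_comp, neg_neg]; exact hρ₇a)
    dsimp at hρ₈
    simp only [Functor.map_neg, neg_comp, neg_neg] at hρ₈
    change (shiftFunctor C (1:ℤ)).obj ((shiftFunctor C (1:ℤ)).obj B) ⟶ K at ρ₈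
    have e1 : (shiftFunctor C (1:ℤ)).map b' ≫ ρ₅ =
        -((shiftFunctor C (1:ℤ)).map b' ≫ (shiftFunctor C (1:ℤ)).map ε ≫ ρ₈) := by
      rw [hρ₇, hρ₈, neg_comp, ← assoc, ← Functor.map_comp, hε, Functor.map_comp, assoc]
    have h5 : (shiftFunctor C (1:ℤ)).map b' ≫
        (ρ₅ + (shiftFunctor C (1:ℤ)).map ε ≫ ρ₈) = 0 := by
      rw [comp_add, e1, neg_add_cancel]
    obtain ⟨ρ₉, hρ₉⟩ := Triangle.yoneda_exact₃ _
      (rot_of_distTriang _ (rot_of_distTriang _ (rot_of_distTriang _ hTZ)))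
      (ρ₅ + (shiftFunctor C (1:ℤ)).map ε ≫ ρ₈) (by dsimp; rw [neg_comp, h5, neg_zero])
    dsimp at hρ₉
    change (shiftFunctor C (1:ℤ)).obj ((shiftFunctor C (1:ℤ)).obj A') ⟶ K at ρ₉
    have hρ₉0 : ρ₉ = 0 :=
      horth0 (C₀.isoClosure.shift _ 1 (C₀.isoClosure.shift A' 1 hA')) hOK ρ₉
    rw [hρ₉0, comp_zero] at hρ₉
    have hρ₅v : ρ₅ = -((shiftFunctor C (1:ℤ)).map ε ≫ ρ₈) :=
      eq_neg_of_add_eq_zero_left hρ₉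
    have hlε : l ≫ (shiftFunctor C (1:ℤ)).map ε = 0 := by
      have h' := comp_distTriang_mor_zero₃₁ _ hTK
      dsimp at h'
      exact h'
    have hfin : s ≫ r - 𝟙 K = 0 := by
      rw [hρ₅, hρ₅v, comp_neg, ← assoc, hlε, zero_comp, neg_zero]
    exact sub_eq_zero.mp hfin
  have : IsIso r := ⟨s, hrs, hsr⟩
  have hNmem : C₁.isoClosure.P N := mem_of_iso _ (asIso r).symm hK
  exact ⟨M, N, m, n, o, hM, hNmem, hTN⟩

def QP (C₀ C₁ : Triangulated.Subcategory C) (y : C) : Prop :=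
  ∃ (y₀ y₁ : C) (f : y₀ ⟶ y) (g : y ⟶ y₁) (h : y₁ ⟶ y₀⟦(1 : ℤ)⟧),
    C₀.isoClosure.P y₀ ∧ C₁.isoClosure.P y₁ ∧ Triangle.mk f g h ∈ distTriang C

lemma qp_of (T : Triangle C) (hT : T ∈ distTriang C) (h₁ : C₀.isoClosure.P T.obj₁)
    (h₃ : C₁.isoClosure.P T.obj₃) : QP C₀ C₁ T.obj₂ :=
  ⟨T.obj₁, T.obj₃, T.mor₁, T.mor₂, T.mor₃, h₁, h₃, hT⟩

lemma qp_iso {y y' : C} (e : y ≅ y') (hy : QP C₀ C₁ y) : QP C₀ C₁ y' := by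
  obtain ⟨y₀, y₁, f, g, h, h₀, h₁, hd⟩ := hy
  refine ⟨y₀, y₁, f ≫ e.hom, e.inv ≫ g, h, h₀, h₁, ?_⟩
  refine isomorphic_distinguished _ hd _ ?_
  exact Triangle.isoMk _ _ (Iso.refl _) e.symm (Iso.refl _) (by simp) (by simp) (by simp)

lemma qp_shift_one {y : C} (hy : QP C₀ C₁ y) :
    QP C₀ C₁ ((shiftFunctor C (1:ℤ)).obj y) := by
  obtain ⟨y₀, y₁, f, g, h, h₀, h₁, hd⟩ := hy
  exact qp_of ((Triangle.mk f g h).rotate.rotate.rotate)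
    (rot_of_distTriang _ (rot_of_distTriang _ (rot_of_distTriang _ hd)))
    (C₀.isoClosure.shift _ 1 h₀) (C₁.isoClosure.shift _ 1 h₁)

lemma qp_shift_negone {y : C} (hy : QP C₀ C₁ y) :
    QP C₀ C₁ ((shiftFunctor C (-1:ℤ)).obj y) := by
  obtain ⟨y₀, y₁, f, g, h, h₀, h₁, hd⟩ := hy
  exact qp_of ((Triangle.mk f g h).invRotate.invRotate.invRotate)
    (inv_rot_of_distTriang _ (inv_rot_of_distTriang _ (inv_rot_of_distTriang _ hd)))
    (C₀.isoClosure.shift _ (-1) h₀) (C₁.isoClosure.shift _ (-1) h₁)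

lemma qp_shift (n : ℤ) {y : C} (hy : QP C₀ C₁ y) :
    QP C₀ C₁ ((shiftFunctor C n).obj y) := by
  induction n using Int.induction_on with
  | zero => exact qp_iso (((shiftFunctorZero C ℤ).app y).symm) hy
  | succ k ih =>
      exact qp_iso (((shiftFunctorAdd' C (k:ℤ) 1 ((k:ℤ)+1) rfl).app y).symm) (qp_shift_one ih)
  | pred k ih =>
      exact qp_iso (((shiftFunctorAdd' C (-(k:ℤ)) (-1) (-(k:ℤ)-1) (by ring)).app y).symm)
        (qp_shift_negone ih)

lemma qp_zero : QP C₀ C₁ (0 : C) :=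
  qp_of (contractibleTriangle 0) (contractible_distinguished 0)
    C₀.isoClosure.zero C₁.isoClosure.zero

/-- the triangulated subcategory of objects admitting a decomposition triangle -/
def qsub (C₀ C₁ : Triangulated.Subcategory C) (hbr : ∀ z : C, C₁.P z → rOrth C₀ z) :
    Triangulated.Subcategory C where
  P := QP C₀ C₁
  zero' := ⟨0, isZero_zero C, qp_zero⟩
  shift y n hy := qp_shift n hy
  ext₂' T hT h₁ h₃ := by
    obtain ⟨A, B, a, b, e, hA, hB, hTX⟩ := h₁
    obtain ⟨A', B', a', b', e', hA', hB', hTZ⟩ := h₃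
    obtain ⟨M, N, m, n, o, hM, hN, hTN⟩ :=
      qext hbr T.mor₁ T.mor₂ T.mor₃ hT a b e hTX a' b' e' hTZ hA hA' hB hB'
    have h1 : QP C₀ C₁ ((shiftFunctor C (1:ℤ)).obj T.obj₂) := ⟨M, N, m, n, o, hM, hN, hTN⟩
    have h2 := qp_shift (-1 : ℤ) h1
    have h3 : QP C₀ C₁ T.obj₂ :=
      qp_iso ((shiftFunctorCompIsoId C (1:ℤ) (-1:ℤ) (by omega)).app T.obj₂) h2
    exact le_isoClosure _ _ h3

end SODAux

open ZeroObject

/-- Given a semi-orthogonal decomposition `(C₀, C₁)` of a triangulated category `C`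
(i.e. `Hom(x, y⟦k⟧) = 0` for `x ∈ C₀`, `y ∈ C₁`, and the smallest strictly full triangulated
subcategory containing both is `C` itself), every object `x` fits in a distinguished triangle
`x₀ ⟶ x ⟶ x₁ ⟶ x₀⟦1⟧` with `x₀ ∈ C₀` and `x₁ ∈ C₁`. -/
theorem sod_decomposition_triangle {C : Type*} [Category C] [Preadditive C] [HasZeroObject C]
    [HasShift C ℤ] [∀ n : ℤ, (shiftFunctor C n).Additive] [Pretriangulated C]
    (C₀ C₁ : Triangulated.Subcategory C)
    (horth : ∀ (x y : C) (k : ℤ), C₀.P x → C₁.P y → ∀ f : x ⟶ y⟦k⟧, f = 0)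
    (hgen : ∀ S : Triangulated.Subcategory C, ClosedUnderIsomorphisms S.P →
      (∀ x, C₀.P x → S.P x) → (∀ x, C₁.P x → S.P x) → ∀ x, S.P x)
    (x : C) :
    ∃ (x₀ x₁ : C) (f : x₀ ⟶ x) (g : x ⟶ x₁) (h : x₁ ⟶ x₀⟦(1 : ℤ)⟧),
      C₀.P x₀ ∧ C₁.P x₁ ∧ Triangle.mk f g h ∈ distTriang C := by
  have hbr : ∀ z : C, C₁.P z → SODAux.rOrth C₀ z := fun z hz t k ht f => horth t z k ht hz f
  have h0 : ∀ y, C₀.P y → (SODAux.qsub C₀ C₁ hbr).P y := by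
    intro y hy
    exact SODAux.qp_of (contractibleTriangle y) (contractible_distinguished y)
      (le_isoClosure _ _ hy) C₁.isoClosure.zero
  have h1 : ∀ y, C₁.P y → (SODAux.qsub C₀ C₁ hbr).P y := by
    intro y hy
    exact SODAux.qp_of (Triangle.mk (0 : (0:C) ⟶ y) (𝟙 y) 0) (contractible_distinguished₁ y)
      C₀.isoClosure.zero (le_isoClosure _ _ hy)
  obtain ⟨x₀, x₁, f, g, h, ⟨x₀', h₀', ⟨e₀⟩⟩, ⟨x₁', h₁', ⟨e₁⟩⟩, hd⟩ :=
    hgen (SODAux.qsub C₀ C₁ hbr) ⟨fun e hh => SODAux.qp_iso e hh⟩ h0 h1 x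
  refine ⟨x₀', x₁', e₀.inv ≫ f, g ≫ e₁.hom,
    e₁.inv ≫ h ≫ (shiftFunctor C (1:ℤ)).map e₀.hom, h₀', h₁', ?_⟩
  refine isomorphic_distinguished _ hd _ ?_
  exact Triangle.isoMk _ _ e₀.symm (Iso.refl x) e₁.symm (by simp [Triangle.mk]) (by simp [Triangle.mk])
    (by simp [Triangle.mk])
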